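/- Let $g$ and $\widehat g$ be contravariant metrics in coordinates $u=(u^1,\dots,u^{n_1})$ and $v=(v^1,\dots,v^{n_2})$, and let $f(u)$ be a positive affine function with $\operatorname{grad}_g f = f(\alpha-4Ku)$ and $\tfrac1f g(\mathrm df,\mathrm df)=4\widehat K - 4Kf$. Then in the coordinates $(u, y)$ with $y^\alpha=f(u)v^\alpha$, the covariant warped product metric $g^{-1}\,du\,du + f\,\widehat g^{-1}\,dv\,dv$ has contravariant matrix $\begin{pmatrix} g & (\alpha-4Ku)\,y^\top\\ y\,(\alpha-4Ku)^\top & (4\widehat K f - 4Kf^2)\, v v^\top + f\,\widehat g\end{pmatrix}$; in particular, if $\widehat g^{ij} = \widehat b^{ij} + \widehat a^{ij}_s v^s - 4\widehat K v^iv^j$, then the lower-right block equals $f(0)\widehat b + \widehat a(y) + m(u)\widehat b - 4K\, y\,y^\top$, where $m(u)=f(u)-f(0)$, so the full contravariant metric is of the form $B + A(u,y) - 4K\,(u,y)(u,y)^\top$ with $B$ constant and $A$ linear. -/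

import Mathlib

open Matrix

/-- pointwise form of the warped-product computation. With
`G_w = J G Jᵀ`, `J = [[Id, 0], [v·df, f·Id]]`, `G = diag(g, f⁻¹ ĝ)`, the contravariant
warped product metric in the coordinates `(u, y)`, `yᵅ = f(u) vᵅ`, has the block form
`[[g, (α - 4Ku) yᵀ], [y (α - 4Ku)ᵀ, (4K̂f - 4Kf²) v vᵀ + f ĝ]]`; in particular, for
`ĝ = b̂ + â(v) - 4K̂ v vᵀ` the lower-right block equals
`f(0) b̂ + â(y) + m(u) b̂ - 4K y yᵀ`, so the full metric is constant + linear - `4K`·quadratic. -/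
theorem stmt18 (n1 n2 : ℕ) (K Kh m0 : ℝ)
    (m A : Fin n1 → ℝ)
    (u : Fin n1 → ℝ) (v : Fin n2 → ℝ)
    (g : Matrix (Fin n1) (Fin n1) ℝ) (hgsym : ∀ i j, g i j = g j i)
    (bh : Matrix (Fin n2) (Fin n2) ℝ) (ah : Fin n2 → Fin n2 → Fin n2 → ℝ)
    (gh : Matrix (Fin n2) (Fin n2) ℝ)
    (hgh : ∀ α β, gh α β = bh α β + (∑ σ, ah α β σ * v σ) - 4 * Kh * v α * v β)
    (F : ℝ) (hF : F = m0 + ∑ i, m i * u i) (hFpos : 0 < F)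
    (hgrad : ∀ i, (∑ j, g i j * m j) = F * (A i - 4 * K * u i))
    (hlen : (∑ i, ∑ j, g i j * m i * m j) = F * (4 * Kh - 4 * K * F))
    (y : Fin n2 → ℝ) (hy : ∀ α, y α = F * v α)
    (J G : Matrix (Fin n1 ⊕ Fin n2) (Fin n1 ⊕ Fin n2) ℝ)
    (hJ : J = Matrix.fromBlocks 1 0 (Matrix.of fun α i => v α * m i)
      (F • (1 : Matrix (Fin n2) (Fin n2) ℝ)))
    (hG : G = Matrix.fromBlocks g 0 0 (F⁻¹ • gh)) :
    J * G * Jᵀ =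
      Matrix.fromBlocks g
        (Matrix.of fun i α => (A i - 4 * K * u i) * y α)
        (Matrix.of fun α i => y α * (A i - 4 * K * u i))
        (Matrix.of fun α β =>
          (4 * Kh * F - 4 * K * F ^ 2) * v α * v β + F * gh α β) ∧
    J * G * Jᵀ =
      Matrix.fromBlocks g
        (Matrix.of fun i α => (A i - 4 * K * u i) * y α)
        (Matrix.of fun α i => y α * (A i - 4 * K * u i))
        (Matrix.of fun α β =>
          m0 * bh α β + (∑ σ, ah α β σ * y σ) + (∑ i, m i * u i) * bh α β
            - 4 * K * y α * y β) := by
  have hne : F ≠ 0 := ne_of_gt hFpos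
  have key : J * G * Jᵀ =
      Matrix.fromBlocks g
        (Matrix.of fun i α => (A i - 4 * K * u i) * y α)
        (Matrix.of fun α i => y α * (A i - 4 * K * u i))
        (Matrix.of fun α β =>
          (4 * Kh * F - 4 * K * F ^ 2) * v α * v β + F * gh α β) := by
    subst hJ hG
    ext (i|α) (j|β) <;>
      simp [Matrix.mul_apply, Fintype.sum_sum_type, Matrix.fromBlocks, Matrix.one_apply]
    · have h1 : ∑ x, g i x * (v β * m x) = v β * ∑ x, g i x * m x := by
        rw [Finset.mul_sum]; exact Finset.sum_congr rfl fun _ _ => by ring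
      rw [h1, hgrad, hy]; ring
    · have h1 : ∑ x, v α * m x * g x j = v α * ∑ x, g j x * m x := by
        rw [Finset.mul_sum]; exact Finset.sum_congr rfl fun x _ => by rw [hgsym x j]; ring
      rw [h1, hgrad, hy]; ring
    · have h1 : ∑ x, (∑ x1, v α * m x1 * g x1 x) * (v β * m x)
          = v α * v β * ∑ i, ∑ j, g i j * m i * m j := by
        calc ∑ x, (∑ x1, v α * m x1 * g x1 x) * (v β * m x)
            = ∑ x, ∑ x1, v α * v β * (g x1 x * m x1 * m x) := by
              refine Finset.sum_congr rfl fun x _ => ?_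
              rw [Finset.sum_mul]
              exact Finset.sum_congr rfl fun x1 _ => by ring
          _ = ∑ x1, ∑ x, v α * v β * (g x1 x * m x1 * m x) := Finset.sum_comm
          _ = v α * v β * ∑ i, ∑ j, g i j * m i * m j := by
              simp [Finset.mul_sum]
      rw [h1, hlen]
      field_simp
  refine ⟨key, key.trans ?_⟩
  ext (i|α) (j|β) <;> simp [Matrix.fromBlocks]
  have hsum : ∑ σ, ah α β σ * y σ = F * ∑ σ, ah α β σ * v σ := by
    rw [Finset.mul_sum]; exact Finset.sum_congr rfl fun σ _ => by rw [hy]; ring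
  rw [hgh α β, hsum, hy, hy]
  linear_combination bh α β * hF
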